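/- Let G be the group of order p^{2r+1}·2^n described in the context, with P the subgroup generated by x, y₁, …, y_r, z₁, …, z_r. Then the commutator subgroup of G equals the subgroup generated by P and a². -/

import Mathlib

namespace Paper

/-- The data of the group `G = P ⋊ D_{2^n}` of order `p^{2r+1}·2^n`: an odd prime
`p ≡ 1 (mod 4)`, `r ≥ 1`, `n ≥ 3` with `2^{n-1}` the exact power of `2` dividing
`p - 1`, an integer `k` of multiplicative order `2^{n-1}` modulo `p` with inverse `q`
modulo `p`, and generators `x, y₁, …, y_r, z₁, …, z_r, a, b` of `G` subject to the
listed relations (commutator convention `[u,v] = u⁻¹v⁻¹uv`). -/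
structure GData (G : Type*) [Group G] [Fintype G] where
  p : ℕ
  r : ℕ
  n : ℕ
  k : ℕ
  q : ℕ
  x : G
  y : Fin r → G
  z : Fin r → G
  a : G
  b : G
  hp : p.Prime
  hp4 : p % 4 = 1
  hr : 1 ≤ r
  hn : 3 ≤ n
  hdvd : 2 ^ (n - 1) ∣ p - 1
  hndvd : ¬ 2 ^ n ∣ p - 1
  hordk : orderOf ((k : ZMod p)) = 2 ^ (n - 1)
  hkq : ((k : ZMod p)) * (q : ZMod p) = 1
  hcard : Fintype.card G = p ^ (2 * r + 1) * 2 ^ n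
  hgen : Subgroup.closure (({x, a, b} : Set G) ∪ Set.range y ∪ Set.range z) = ⊤
  hxp : x ^ p = 1
  hyp : ∀ i, y i ^ p = 1
  hzp : ∀ i, z i ^ p = 1
  han : a ^ 2 ^ (n - 1) = 1
  hb2 : b ^ 2 = 1
  hxy : ∀ i, x⁻¹ * (y i)⁻¹ * x * y i = 1
  hxz : ∀ i, x⁻¹ * (z i)⁻¹ * x * z i = 1
  hyy : ∀ i j, (y i)⁻¹ * (y j)⁻¹ * y i * y j = 1
  hzz : ∀ i j, (z i)⁻¹ * (z j)⁻¹ * z i * z j = 1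
  hyz : ∀ i, (y i)⁻¹ * (z i)⁻¹ * y i * z i = x
  hyz' : ∀ i j, i ≠ j → (y i)⁻¹ * (z j)⁻¹ * y i * z j = 1
  hax : a⁻¹ * x⁻¹ * a * x = 1
  hay : ∀ i, a⁻¹ * (y i)⁻¹ * a * y i = (y i) ^ (1 - (k : ℤ))
  haz : ∀ i, a⁻¹ * (z i)⁻¹ * a * z i = (z i) ^ (1 - (q : ℤ))
  hbx : b⁻¹ * x⁻¹ * b * x = x ^ 2
  hby : ∀ i, b⁻¹ * (y i)⁻¹ * b * y i = z i * y i
  hbz : ∀ i, b⁻¹ * (z i)⁻¹ * b * z i = y i * z i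
  hba : b⁻¹ * a⁻¹ * b * a = a ^ 2

variable {G : Type*} [Group G] [Fintype G]

/-- The subgroup `P = ⟨x, y₁, …, y_r, z₁, …, z_r⟩` of `G`. -/
def GData.P (d : GData G) : Subgroup G :=
  Subgroup.closure (({d.x} : Set G) ∪ Set.range d.y ∪ Set.range d.z)

end Paper

namespace Stmt6Aux
open Subgroup
open scoped commutatorElement

section Generic
variable {H : Type*} [Group H]

lemma conj_zpow' (u v : H) (m : ℤ) : u * v ^ m * u⁻¹ = (u * v * u⁻¹) ^ m := by
  simpa using (map_zpow (MulAut.conj u) v m).symm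

lemma conj_zpow'' (u v : H) (m : ℤ) : u⁻¹ * v ^ m * u = (u⁻¹ * v * u) ^ m := by
  simpa using conj_zpow' u⁻¹ v m

lemma rel_conj {u v w : H} (h : u⁻¹ * v⁻¹ * u * v = w) : u⁻¹ * v * u = v * w⁻¹ := by
  have key : u⁻¹ * v * u = v * (u⁻¹ * v⁻¹ * u * v)⁻¹ := by group
  rw [key, h]

lemma comm_of_rel {u v : H} (h : u⁻¹ * v⁻¹ * u * v = 1) : u * v = v * u := by
  have h1 : u⁻¹ * v * u = v := by simpa using rel_conj h
  have h2 : u * (u⁻¹ * v * u) * u⁻¹ = u * v * u⁻¹ := by rw [h1]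
  have h3 : u * v * u⁻¹ = v := by rw [← h2]; group
  calc u * v = (u * v * u⁻¹) * u := by group
  _ = v * u := by rw [h3]

lemma zpow_eq_of_cast_eq {g : H} {p : ℕ} (hg : g ^ p = 1) {m l : ℤ}
    (h : ((m : ZMod p)) = ((l : ZMod p))) : g ^ m = g ^ l := by
  have h0 : ((m - l : ℤ) : ZMod p) = 0 := by push_cast; rw [h]; ring
  obtain ⟨t, ht⟩ := (ZMod.intCast_zmod_eq_zero_iff_dvd _ p).mp h0
  have hm : m = l + p * t := by linarith
  rw [hm, zpow_add, zpow_mul, zpow_natCast, hg, one_zpow, mul_one]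

end Generic

variable {G : Type*} [Group G] [Fintype G] (d : Paper.GData G)

/-- The generating set of `N = P ⊔ ⟨a²⟩`. -/
def T (d : Paper.GData G) : Set G :=
  (({d.x} : Set G) ∪ Set.range d.y ∪ Set.range d.z) ∪ {d.a ^ 2}

def N (d : Paper.GData G) : Subgroup G := Subgroup.closure (T d)

lemma N_eq : d.P ⊔ Subgroup.closure {d.a ^ 2} = N d := by
  rw [Paper.GData.P, N, T]
  exact (Subgroup.closure_union _ _).symm

lemma mem_x : d.x ∈ N d := subset_closure (by left; left; left; rfl)
lemma mem_y (i : Fin d.r) : d.y i ∈ N d := subset_closure (by left; left; right; exact ⟨i, rfl⟩)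
lemma mem_z (i : Fin d.r) : d.z i ∈ N d := subset_closure (by left; right; exact ⟨i, rfl⟩)
lemma mem_a2 : d.a ^ 2 ∈ N d := subset_closure (by right; rfl)

-- conjugation formulas
lemma a_inv_y (i : Fin d.r) : d.a⁻¹ * d.y i * d.a = d.y i ^ (d.k : ℤ) := by
  have h := rel_conj (d.hay i)
  rw [h]
  group

lemma a_inv_z (i : Fin d.r) : d.a⁻¹ * d.z i * d.a = d.z i ^ (d.q : ℤ) := by
  have h := rel_conj (d.haz i)
  rw [h]
  group

lemma kq_cast : ((d.k * d.q : ℤ) : ZMod d.p) = ((1 : ℤ) : ZMod d.p) := by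
  push_cast
  rw [d.hkq]

lemma a_y (i : Fin d.r) : d.a * d.y i * d.a⁻¹ = d.y i ^ (d.q : ℤ) := by
  have h1 : d.a⁻¹ * d.y i ^ (d.q : ℤ) * d.a = d.y i := by
    rw [conj_zpow'', a_inv_y, ← zpow_mul]
    have h2 := zpow_eq_of_cast_eq (d.hyp i) (kq_cast d)
    rw [zpow_one] at h2
    exact h2
  have h2 : d.a * (d.a⁻¹ * d.y i ^ (d.q : ℤ) * d.a) * d.a⁻¹ = d.y i ^ (d.q : ℤ) := by group
  rw [h1] at h2
  exact h2

lemma a_z (i : Fin d.r) : d.a * d.z i * d.a⁻¹ = d.z i ^ (d.k : ℤ) := by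
  have h1 : d.a⁻¹ * d.z i ^ (d.k : ℤ) * d.a = d.z i := by
    rw [conj_zpow'', a_inv_z, ← zpow_mul]
    have hc : (((d.q : ℤ) * (d.k : ℤ) : ℤ) : ZMod d.p) = ((1 : ℤ) : ZMod d.p) := by
      rw [← kq_cast d]; push_cast; ring
    have h2 := zpow_eq_of_cast_eq (d.hzp i) hc
    rw [zpow_one] at h2
    exact h2
  have h2 : d.a * (d.a⁻¹ * d.z i ^ (d.k : ℤ) * d.a) * d.a⁻¹ = d.z i ^ (d.k : ℤ) := by group
  rw [h1] at h2
  exact h2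

lemma comm_ax : d.a * d.x = d.x * d.a := comm_of_rel d.hax

lemma b_inv : d.b⁻¹ = d.b := by
  have h := d.hb2
  rw [pow_two] at h
  exact inv_eq_of_mul_eq_one_right h

lemma b_x : d.b * d.x * d.b⁻¹ = d.x⁻¹ := by
  have h := rel_conj d.hbx   -- b⁻¹ * x * b = x * (x^2)⁻¹
  have h1 : d.b⁻¹ * d.x * d.b = d.x⁻¹ := by rw [h]; group
  rw [b_inv]
  rw [b_inv] at h1
  exact h1

lemma b_y (i : Fin d.r) : d.b * d.y i * d.b⁻¹ = (d.z i)⁻¹ := by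
  have h := rel_conj (d.hby i)  -- b⁻¹ * y * b = y * (z*y)⁻¹
  have h1 : d.b⁻¹ * d.y i * d.b = (d.z i)⁻¹ := by rw [h]; group
  rw [b_inv]; rw [b_inv] at h1; exact h1

lemma b_z (i : Fin d.r) : d.b * d.z i * d.b⁻¹ = (d.y i)⁻¹ := by
  have h := rel_conj (d.hbz i)
  have h1 : d.b⁻¹ * d.z i * d.b = (d.y i)⁻¹ := by rw [h]; group
  rw [b_inv]; rw [b_inv] at h1; exact h1

lemma b_a : d.b * d.a * d.b⁻¹ = d.a⁻¹ := by
  have h := rel_conj d.hba  -- b⁻¹ * a * b = a * (a^2)⁻¹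
  have h1 : d.b⁻¹ * d.a * d.b = d.a⁻¹ := by rw [h]; group
  rw [b_inv]; rw [b_inv] at h1; exact h1

-- conjugates of a^2 by y i and z i land in N
lemma y_a2 (i : Fin d.r) : d.y i * d.a ^ 2 * (d.y i)⁻¹ ∈ N d := by
  have e2 : d.a⁻¹ * (d.a⁻¹ * d.y i * d.a) * d.a = d.y i ^ ((d.k : ℤ) * d.k) := by
    rw [a_inv_y, conj_zpow'', a_inv_y, ← zpow_mul]
  have key : d.y i * d.a ^ 2 * (d.y i)⁻¹
      = d.a ^ 2 * ((d.a⁻¹ * (d.a⁻¹ * d.y i * d.a) * d.a) * (d.y i)⁻¹) := by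
    rw [pow_two]; group
  rw [key, e2]
  exact mul_mem (mem_a2 d) (mul_mem (zpow_mem (mem_y d i) _) (inv_mem (mem_y d i)))

lemma z_a2 (i : Fin d.r) : d.z i * d.a ^ 2 * (d.z i)⁻¹ ∈ N d := by
  have e2 : d.a⁻¹ * (d.a⁻¹ * d.z i * d.a) * d.a = d.z i ^ ((d.q : ℤ) * d.q) := by
    rw [a_inv_z, conj_zpow'', a_inv_z, ← zpow_mul]
  have key : d.z i * d.a ^ 2 * (d.z i)⁻¹
      = d.a ^ 2 * ((d.a⁻¹ * (d.a⁻¹ * d.z i * d.a) * d.a) * (d.z i)⁻¹) := by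
    rw [pow_two]; group
  rw [key, e2]
  exact mul_mem (mem_a2 d) (mul_mem (zpow_mem (mem_z d i) _) (inv_mem (mem_z d i)))

lemma conj_maps (g : G) (hg : ∀ s ∈ T d, g * s * g⁻¹ ∈ N d) :
    ∀ n ∈ N d, g * n * g⁻¹ ∈ N d := by
  intro n hn
  induction hn using Subgroup.closure_induction with
  | mem s hs => exact hg s hs
  | one => simpa using one_mem (N d)
  | mul u v hu hv ihu ihv =>
      have h := mul_mem ihu ihv
      have e : g * u * g⁻¹ * (g * v * g⁻¹) = g * (u * v) * g⁻¹ := by group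
      rwa [e] at h
  | inv u hu ihu =>
      have h := inv_mem ihu
      have e : (g * u * g⁻¹)⁻¹ = g * u⁻¹ * g⁻¹ := by group
      rwa [e] at h

lemma conj_a (s : G) (hs : s ∈ T d) : d.a * s * d.a⁻¹ ∈ N d := by
  rcases hs with ((h | ⟨i, rfl⟩) | ⟨i, rfl⟩) | h
  · rcases h with rfl
    have : d.a * d.x * d.a⁻¹ = d.x := by rw [comm_ax]; group
    rw [this]; exact mem_x d
  · rw [a_y]; exact zpow_mem (mem_y d i) _
  · rw [a_z]; exact zpow_mem (mem_z d i) _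
  · rcases h with rfl
    have : d.a * d.a ^ 2 * d.a⁻¹ = d.a ^ 2 := by group
    rw [this]; exact mem_a2 d

lemma conj_a_inv (s : G) (hs : s ∈ T d) : d.a⁻¹ * s * d.a⁻¹⁻¹ ∈ N d := by
  rw [inv_inv]
  rcases hs with ((h | ⟨i, rfl⟩) | ⟨i, rfl⟩) | h
  · rcases h with rfl
    have : d.a⁻¹ * d.x * d.a = d.x := by rw [mul_assoc, ← comm_ax]; group
    rw [this]; exact mem_x d
  · rw [a_inv_y]; exact zpow_mem (mem_y d i) _
  · rw [a_inv_z]; exact zpow_mem (mem_z d i) _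
  · rcases h with rfl
    have : d.a⁻¹ * d.a ^ 2 * d.a = d.a ^ 2 := by group
    rw [this]; exact mem_a2 d

lemma conj_b (s : G) (hs : s ∈ T d) : d.b * s * d.b⁻¹ ∈ N d := by
  rcases hs with ((h | ⟨i, rfl⟩) | ⟨i, rfl⟩) | h
  · rcases h with rfl
    rw [b_x]; exact inv_mem (mem_x d)
  · rw [b_y]; exact inv_mem (mem_z d i)
  · rw [b_z]; exact inv_mem (mem_y d i)
  · rcases h with rfl
    have : d.b * d.a ^ 2 * d.b⁻¹ = (d.b * d.a * d.b⁻¹) ^ 2 := by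
      rw [pow_two, pow_two]; group
    rw [this, b_a, inv_pow]
    exact inv_mem (mem_a2 d)

lemma mem_norm_a : d.a ∈ Subgroup.normalizer (N d : Set G) := by
  rw [Subgroup.mem_normalizer_iff]
  intro h
  constructor
  · exact fun hh => conj_maps d d.a (conj_a d) h hh
  · intro hh
    have h2 := conj_maps d d.a⁻¹ (conj_a_inv d) _ hh
    have e : d.a⁻¹ * (d.a * h * d.a⁻¹) * d.a⁻¹⁻¹ = h := by group
    rwa [e] at h2

lemma mem_norm_b : d.b ∈ Subgroup.normalizer (N d : Set G) := by
  rw [Subgroup.mem_normalizer_iff]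
  intro h
  constructor
  · exact fun hh => conj_maps d d.b (conj_b d) h hh
  · intro hh
    have h2 := conj_maps d d.b (conj_b d) _ hh
    have hb := d.hb2
    rw [pow_two] at hb
    have e : d.b * (d.b * h * d.b⁻¹) * d.b⁻¹ = (d.b * d.b) * h * (d.b * d.b)⁻¹ := by group
    rw [e, hb] at h2
    simpa using h2

lemma N_normal : (N d).Normal := by
  rw [← Subgroup.normalizer_eq_top_iff, eq_top_iff, ← d.hgen]
  refine (Subgroup.closure_le _).mpr ?_
  rintro s (((rfl | rfl | rfl) | ⟨i, rfl⟩) | ⟨i, rfl⟩)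
  · exact Subgroup.le_normalizer (mem_x d)
  · exact mem_norm_a d
  · exact mem_norm_b d
  · exact Subgroup.le_normalizer (mem_y d i)
  · exact Subgroup.le_normalizer (mem_z d i)

lemma k_ne_one : (d.k : ZMod d.p) ≠ 1 := by
  intro h
  have h1 : (2 : ℕ) ^ (d.n - 1) = 1 := by
    rw [← d.hordk, h, orderOf_one]
  have h2 := d.hn
  have h3 : d.n - 1 ≠ 0 := by omega
  have h4 : 1 < 2 ^ (d.n - 1) := Nat.one_lt_two_pow_iff.mpr h3
  omega

lemma q_ne_one : (d.q : ZMod d.p) ≠ 1 := by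
  intro h
  have h1 := d.hkq
  rw [h, mul_one] at h1
  exact k_ne_one d h1

lemma y_mem_commutator (i : Fin d.r) : d.y i ∈ commutator G := by
  haveI : NeZero d.p := ⟨d.hp.pos.ne'⟩
  haveI := Fact.mk d.hp
  have hw : d.y i ^ (1 - (d.k : ℤ)) ∈ commutator G := by
    have e : ⁅d.a⁻¹, (d.y i)⁻¹⁆ = d.y i ^ (1 - (d.k : ℤ)) := by
      rw [commutatorElement_def, inv_inv, inv_inv]
      exact d.hay i
    rw [_root_.commutator_def, ← e]
    exact Subgroup.commutator_mem_commutator (Subgroup.mem_top _) (Subgroup.mem_top _)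
  have hu : (1 - (d.k : ZMod d.p)) ≠ 0 := by
    intro h0
    exact k_ne_one d (by linear_combination -h0)
  set c : ZMod d.p := (1 - (d.k : ZMod d.p))⁻¹ with hc
  have hmul : (1 - (d.k : ZMod d.p)) * c = 1 := mul_inv_cancel₀ hu
  have hcast : (((1 - (d.k : ℤ)) * (c.val : ℤ) : ℤ) : ZMod d.p) = ((1 : ℤ) : ZMod d.p) := by
    push_cast
    rw [ZMod.natCast_val, ZMod.cast_id]
    exact hmul
  have he : (d.y i ^ (1 - (d.k : ℤ))) ^ ((c.val : ℤ)) = d.y i := by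
    rw [← zpow_mul]
    have := zpow_eq_of_cast_eq (d.hyp i) hcast
    rwa [zpow_one] at this
  rw [← he]
  exact Subgroup.zpow_mem _ hw _

lemma z_mem_commutator (i : Fin d.r) : d.z i ∈ commutator G := by
  haveI : NeZero d.p := ⟨d.hp.pos.ne'⟩
  haveI := Fact.mk d.hp
  have hw : d.z i ^ (1 - (d.q : ℤ)) ∈ commutator G := by
    have e : ⁅d.a⁻¹, (d.z i)⁻¹⁆ = d.z i ^ (1 - (d.q : ℤ)) := by
      rw [commutatorElement_def, inv_inv, inv_inv]
      exact d.haz i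
    rw [_root_.commutator_def, ← e]
    exact Subgroup.commutator_mem_commutator (Subgroup.mem_top _) (Subgroup.mem_top _)
  have hu : (1 - (d.q : ZMod d.p)) ≠ 0 := by
    intro h0
    exact q_ne_one d (by linear_combination -h0)
  set c : ZMod d.p := (1 - (d.q : ZMod d.p))⁻¹ with hc
  have hmul : (1 - (d.q : ZMod d.p)) * c = 1 := mul_inv_cancel₀ hu
  have hcast : (((1 - (d.q : ℤ)) * (c.val : ℤ) : ℤ) : ZMod d.p) = ((1 : ℤ) : ZMod d.p) := by
    push_cast
    rw [ZMod.natCast_val, ZMod.cast_id]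
    exact hmul
  have he : (d.z i ^ (1 - (d.q : ℤ))) ^ ((c.val : ℤ)) = d.z i := by
    rw [← zpow_mul]
    have := zpow_eq_of_cast_eq (d.hzp i) hcast
    rwa [zpow_one] at this
  rw [← he]
  exact Subgroup.zpow_mem _ hw _

lemma x_mem_commutator : d.x ∈ commutator G := by
  have i0 : Fin d.r := ⟨0, d.hr⟩
  have e : ⁅(d.y i0)⁻¹, (d.z i0)⁻¹⁆ = d.x := by
    rw [commutatorElement_def, inv_inv, inv_inv]
    exact d.hyz i0
  rw [_root_.commutator_def, ← e]
  exact Subgroup.commutator_mem_commutator (Subgroup.mem_top _) (Subgroup.mem_top _)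

lemma a2_mem_commutator : d.a ^ 2 ∈ commutator G := by
  have e : ⁅d.b⁻¹, d.a⁻¹⁆ = d.a ^ 2 := by
    rw [commutatorElement_def, inv_inv, inv_inv]
    exact d.hba
  rw [_root_.commutator_def, ← e]
  exact Subgroup.commutator_mem_commutator (Subgroup.mem_top _) (Subgroup.mem_top _)

lemma N_le_commutator : N d ≤ commutator G := by
  rw [N]
  refine (Subgroup.closure_le _).mpr ?_
  rintro s (((rfl | ⟨i, rfl⟩) | ⟨i, rfl⟩) | rfl)
  · exact x_mem_commutator d
  · exact y_mem_commutator d i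
  · exact z_mem_commutator d i
  · exact a2_mem_commutator d

lemma commutator_le_N : commutator G ≤ N d := by
  haveI := N_normal d
  set φ := QuotientGroup.mk' (N d) with hφ
  set S : Set G := ({d.x, d.a, d.b} : Set G) ∪ Set.range d.y ∪ Set.range d.z with hS
  have hsur : Function.Surjective φ := QuotientGroup.mk'_surjective _
  have hcl : Subgroup.closure (φ '' S) = ⊤ := by
    rw [← MonoidHom.map_closure, d.hgen]
    exact Subgroup.map_top_of_surjective _ hsur
  have himg : ∀ s ∈ S, φ s = 1 ∨ φ s = φ d.a ∨ φ s = φ d.b := by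
    rintro s (((rfl | rfl | rfl) | ⟨i, rfl⟩) | ⟨i, rfl⟩)
    · exact Or.inl ((QuotientGroup.eq_one_iff _).mpr (mem_x d))
    · exact Or.inr (Or.inl rfl)
    · exact Or.inr (Or.inr rfl)
    · exact Or.inl ((QuotientGroup.eq_one_iff _).mpr (mem_y d i))
    · exact Or.inl ((QuotientGroup.eq_one_iff _).mpr (mem_z d i))
  have hab : φ d.a * φ d.b = φ d.b * φ d.a := by
    have h1 : φ (d.b⁻¹ * d.a⁻¹ * d.b * d.a) = 1 := by
      rw [d.hba]
      exact (QuotientGroup.eq_one_iff _).mpr (mem_a2 d)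
    have h2 : (φ d.b)⁻¹ * (φ d.a)⁻¹ * φ d.b * φ d.a = 1 := by
      simpa [map_mul, map_inv] using h1
    exact (comm_of_rel h2).symm
  have hcent : ∀ s ∈ φ '' S, s ∈ Subgroup.center (G ⧸ N d) := by
    rintro s ⟨s0, hs0, rfl⟩
    rw [Subgroup.mem_center_iff]
    intro u
    have hu : u ∈ Subgroup.closure (φ '' S) := hcl ▸ Subgroup.mem_top u
    induction hu using Subgroup.closure_induction with
    | mem t ht =>
        obtain ⟨t0, ht0, rfl⟩ := ht
        rcases himg s0 hs0 with h | h | h <;> rcases himg t0 ht0 with h' | h' | h' <;>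
          rw [h, h'] <;> first | simp | rfl | exact hab | exact hab.symm
    | one => simp
    | mul u v _ _ ihu ihv => rw [mul_assoc, ihv, ← mul_assoc, ihu, mul_assoc]
    | inv u _ ihu =>
        have : Commute u (φ s0) := ihu
        exact this.inv_left.eq
  have hall : ∀ u v : G ⧸ N d, u * v = v * u := by
    have hle : Subgroup.closure (φ '' S) ≤ Subgroup.center (G ⧸ N d) :=
      (Subgroup.closure_le _).mpr hcent
    rw [hcl] at hle
    intro u v
    exact Subgroup.mem_center_iff.mp (hle (Subgroup.mem_top v)) u
  rw [_root_.commutator_def, Subgroup.commutator_le]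
  intro g _ h _
  have h1 : φ ⁅g, h⁆ = 1 := by
    rw [map_commutatorElement]
    exact commutatorElement_eq_one_iff_commute.mpr (hall (φ g) (φ h))
  exact (QuotientGroup.eq_one_iff _).mp h1

end Stmt6Aux

/-- The commutator subgroup of `G` equals the subgroup generated by
`P` and `a²`. -/
theorem stmt6 {G : Type*} [Group G] [Fintype G] (d : Paper.GData G) :
    commutator G = d.P ⊔ Subgroup.closure {d.a ^ 2} := by
  rw [Stmt6Aux.N_eq d]
  exact le_antisymm (Stmt6Aux.commutator_le_N d) (Stmt6Aux.N_le_commutator d)
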